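/- Let Λ be a rank-r graph, a ∈ Λ⁰, and let (V_λ)_{λ∈Λ} be a Λ-contraction on the one-dimensional Hilbert space ℂ (so each V_λ is a complex number) with V_a = 1. Write Λ_{a,a} = {λ ∈ Λ : r(λ) = s(λ) = a} and suppose that for each j ∈ {1,…,r}, κ_j := Σ_{λ∈Λ^{e_j}∩Λ_{a,a}} |V_λ|² < 1. Then the family (|V_λ|²)_{λ∈Λ_{a,a}} is summable with sum Π_{j=1}^r (1 − κ_j)^{−1}, the vector ξ = Σ_{λ∈Λ_{a,a}} conj(V_λ) δ_λ belongs to ℓ²(Λ), and the normalized vector ξ̃ = ξ/‖ξ‖ satisfies ⟨ξ̃, L_μ ξ̃⟩ = V_μ for every μ ∈ Λ (inner product conjugate-linear in the first variable). -/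

import Mathlib

open scoped ComplexOrder
open ContinuousLinearMap

set_option synthInstance.maxHeartbeats 1000000
set_option maxHeartbeats 1000000

noncomputable section

universe u

/-- A rank-`r` graph: a countable small category whose morphisms form `Λ`, objects being
identified with degree-zero morphisms, equipped with a degree functor into `ℕ^r`
satisfying the unique factorisation property. -/
structure KGraph (r : ℕ) where
  Λ : Type
  countable : Countable Λ
  src : Λ → Λ
  tgt : Λ → Λ
  deg : Λ → Fin r → ℕ
  comp : Λ → Λ → Λ
  deg_src : ∀ l, deg (src l) = 0
  deg_tgt : ∀ l, deg (tgt l) = 0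
  src_eq_self : ∀ l, deg l = 0 → src l = l
  tgt_eq_self : ∀ l, deg l = 0 → tgt l = l
  comp_src_self : ∀ l, comp l (src l) = l
  tgt_comp_self : ∀ l, comp (tgt l) l = l
  src_comp : ∀ l m, src l = tgt m → src (comp l m) = src m
  tgt_comp : ∀ l m, src l = tgt m → tgt (comp l m) = tgt l
  deg_comp : ∀ l m, src l = tgt m → deg (comp l m) = deg l + deg m
  comp_assoc : ∀ l m n, src l = tgt m → src m = tgt n →
    comp (comp l m) n = comp l (comp m n)
  factorisation : ∀ (l : Λ) (m n : Fin r → ℕ), deg l = m + n →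
    ∃! p : Λ × Λ, deg p.1 = m ∧ deg p.2 = n ∧ src p.1 = tgt p.2 ∧ comp p.1 p.2 = l

namespace KGraph

variable {r : ℕ} (K : KGraph r)

/-- `|λ|`, the total degree of a morphism. -/
def degSum (l : K.Λ) : ℕ := ∑ j, K.deg l j

/-- The vertices `Λ⁰`, i.e. the degree-zero morphisms. -/
def IsVertex (l : K.Λ) : Prop := K.deg l = 0

/-- The pairs `(α, β)` describing the elements `μα = νβ` of `MCE(μ, ν)`. -/
def MCEPair (μ ν : K.Λ) (p : K.Λ × K.Λ) : Prop :=
  K.src μ = K.tgt p.1 ∧ K.src ν = K.tgt p.2 ∧ K.comp μ p.1 = K.comp ν p.2 ∧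
    K.deg (K.comp μ p.1) = K.deg μ ⊔ K.deg ν

/-- `Λ` is finitely aligned. -/
def FinitelyAligned : Prop := ∀ μ ν : K.Λ, {p : K.Λ × K.Λ | K.MCEPair μ ν p}.Finite

/-- `Λ` is row-finite. -/
def RowFinite : Prop :=
  ∀ (n : Fin r → ℕ) (a : K.Λ), {l : K.Λ | K.deg l = n ∧ K.tgt l = a}.Finite

/-- `Λ` is a finite graph: each `Λ^n` is finite. -/
def FiniteGraph : Prop := ∀ n : Fin r → ℕ, {l : K.Λ | K.deg l = n}.Finite

/-- `Λ` has no sources. -/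
def NoSources : Prop :=
  ∀ a : K.Λ, K.IsVertex a → ∀ n : Fin r → ℕ, ∃ l, K.deg l = n ∧ K.tgt l = a

/-- `Λ` is cofinal. -/
def Cofinal : Prop := ∀ a : K.Λ, K.IsVertex a → ∃ l, K.deg l ≠ 0 ∧ K.tgt l = a

end KGraph

section Families

variable {r : ℕ} (K : KGraph r)
variable {H : Type u} [NormedAddCommGroup H] [InnerProductSpace ℂ H] [CompleteSpace H]

/-- A `Λ`-contraction on a Hilbert space `H`. -/
def IsLambdaContraction (V : K.Λ → H →L[ℂ] H) : Prop :=
  (∀ l m, K.src l ≠ K.tgt m → V l ∘L V m = 0) ∧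
  (∀ l m, K.src l = K.tgt m → V l ∘L V m = V (K.comp l m)) ∧
  (∀ (n : Fin r → ℕ) (F : Finset K.Λ), (∀ l ∈ F, K.deg l = n) →
    ((1 : H →L[ℂ] H) - ∑ l ∈ F, V l ∘L adjoint (V l)).IsPositive) ∧
  (∀ a, K.IsVertex a → IsSelfAdjoint (V a) ∧ V a ∘L V a = V a) ∧
  (∀ ξ : H, HasSum (fun a : {a : K.Λ // K.IsVertex a} => V a.1 ξ) ξ)

/-- A `Λ`-isometry on a Hilbert space `H`. -/
def IsLambdaIsometry (V : K.Λ → H →L[ℂ] H) : Prop :=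
  IsLambdaContraction K V ∧
  ∀ (n : Fin r → ℕ) (ξ : H),
    HasSum (fun l : {l : K.Λ // K.deg l = n} => V l.1 (adjoint (V l.1) ξ)) ξ

/-- `D` is the defect operator `Δ_s(V)` (a strong-operator-topology sum). -/
def IsDefectOperator (V : K.Λ → H →L[ℂ] H) (s : ℝ) (D : H →L[ℂ] H) : Prop :=
  ∀ ξ : H, HasSum
    (fun m : {m : K.Λ // K.deg m ≤ 1} =>
      (((-(s ^ 2)) ^ K.degSum m.1 : ℝ) : ℂ) • V m.1 (adjoint (V m.1) ξ)) (D ξ)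

/-- The Popescu condition for a `Λ`-contraction. -/
def PopescuCondition (V : K.Λ → H →L[ℂ] H) : Prop :=
  ∃ ρ ∈ Set.Ioo (0 : ℝ) 1, ∀ s ∈ Set.Ioo ρ 1,
    ∃ D : H →L[ℂ] H, IsDefectOperator K V s D ∧ D.IsPositive

/-- A Toeplitz-Cuntz-Krieger `Λ`-family. -/
def IsTCKFamily (W : K.Λ → H →L[ℂ] H) : Prop :=
  (∀ l, W l ∘L adjoint (W l) ∘L W l = W l) ∧
  (∀ a, K.IsVertex a → IsSelfAdjoint (W a) ∧ W a ∘L W a = W a) ∧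
  (∀ a b, K.IsVertex a → K.IsVertex b → a ≠ b → W a ∘L W b = 0) ∧
  (∀ l m, K.src l = K.tgt m → W l ∘L W m = W (K.comp l m)) ∧
  (∀ l, adjoint (W l) ∘L W l = W (K.src l)) ∧
  (∀ n : Fin r → ℕ, n ≠ 0 → ∀ a, K.IsVertex a → ∀ F : Finset K.Λ,
    (∀ l ∈ F, K.deg l = n ∧ K.tgt l = a) →
    (W a - ∑ l ∈ F, W l ∘L adjoint (W l)).IsPositive) ∧
  (∀ μ ν : K.Λ, ∀ ξ : H,
    HasSum (fun p : {p : K.Λ × K.Λ // K.MCEPair μ ν p} => W p.1.1 (adjoint (W p.1.2) ξ))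
      (adjoint (W μ) (W ν ξ)))

/-- A Cuntz-Pimsner `Λ`-family. -/
def IsCPFamily (W : K.Λ → H →L[ℂ] H) : Prop :=
  IsTCKFamily K W ∧
  ∀ n : Fin r → ℕ, n ≠ 0 → ∀ a, K.IsVertex a → ∀ ξ : H,
    HasSum (fun l : {l : K.Λ // K.deg l = n ∧ K.tgt l = a} => W l.1 (adjoint (W l.1) ξ))
      (W a ξ)

end Families

section Creation

variable {r : ℕ}

/-- The Fock space `ℓ²(Λ)` of a higher-rank graph. -/
abbrev FockSpace (K : KGraph r) : Type := lp (fun _ : K.Λ => ℂ) 2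

/-- `L` is the family of creation operators on `ℓ²(Λ)`:
`L_λ δ_μ = δ_{λμ}` if `s(λ) = r(μ)` and `L_λ δ_μ = 0` otherwise. -/
def IsCreationFamily (K : KGraph r) [DecidableEq K.Λ]
    (L : K.Λ → FockSpace K →L[ℂ] FockSpace K) : Prop :=
  ∀ l m : K.Λ,
    (K.src l = K.tgt m → L l (lp.single 2 m 1) = lp.single 2 (K.comp l m) 1) ∧
    (K.src l ≠ K.tgt m → L l (lp.single 2 m 1) = 0)

end Creation


/-- A `Λ`-contraction on the one-dimensional Hilbert space `ℂ`, written in terms of the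
scalars representing the operators. -/
def IsScalarLambdaContraction {r : ℕ} (K : KGraph r) (v : K.Λ → ℂ) : Prop :=
  (∀ l m, K.src l ≠ K.tgt m → v l * v m = 0) ∧
  (∀ l m, K.src l = K.tgt m → v l * v m = v (K.comp l m)) ∧
  (∀ (n : Fin r → ℕ) (F : Finset K.Λ), (∀ l ∈ F, K.deg l = n) →
    ∑ l ∈ F, ‖v l‖ ^ 2 ≤ 1) ∧
  (∀ a, K.IsVertex a → v a = 0 ∨ v a = 1) ∧
  HasSum (fun a : {a : K.Λ // K.IsVertex a} => v a.1) 1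

section CharAux

open scoped ENNReal NNReal

namespace CharAux

variable {r : ℕ} (K : KGraph r)

/-- Morphisms of degree `n` from `a` to `a`. -/
def T (a : K.Λ) (n : Fin r → ℕ) : Set K.Λ :=
  {l | K.deg l = n ∧ K.tgt l = a ∧ K.src l = a}

/-- Morphisms from `a` to `a`. -/
def S (a : K.Λ) : Set K.Λ := {l | K.tgt l = a ∧ K.src l = a}

/-- The `ℝ≥0∞`-valued weight `‖v l‖ ^ 2`. -/
def F (v : K.Λ → ℂ) (l : K.Λ) : ℝ≥0∞ := (‖v l‖₊ : ℝ≥0∞) ^ 2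

lemma F_ne_zero {v : K.Λ → ℂ} {l : K.Λ} : F K v l ≠ 0 ↔ v l ≠ 0 := by
  simp [F, pow_eq_zero_iff]

variable [DecidableEq K.Λ] {a : K.Λ} {v : K.Λ → ℂ}

lemma vertex_eq_zero (hv : IsScalarLambdaContraction K v) (ha : K.IsVertex a)
    (hva : v a = 1) {b : K.Λ} (hb : K.IsVertex b) (hba : b ≠ a) : v b = 0 := by
  rcases hv.2.2.2.1 b hb with h | h
  · exact h
  · exfalso
    have h2 := hv.2.2.1 0 {a, b} ?_
    · rw [Finset.sum_pair (Ne.symm hba), hva, h] at h2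
      norm_num at h2
    · intro l hl
      rcases Finset.mem_insert.1 hl with rfl | hl
      · exact ha
      · rw [Finset.mem_singleton.1 hl]; exact hb

lemma mem_S_of_ne_zero (hv : IsScalarLambdaContraction K v) (ha : K.IsVertex a)
    (hva : v a = 1) {μ : K.Λ} (hμ : v μ ≠ 0) : K.tgt μ = a ∧ K.src μ = a := by
  constructor
  · by_contra h
    have hvert : K.IsVertex (K.tgt μ) := K.deg_tgt μ
    have hcomp : K.src (K.tgt μ) = K.tgt μ := K.src_eq_self _ hvert
    have h1 := hv.2.1 (K.tgt μ) μ hcomp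
    rw [K.tgt_comp_self, vertex_eq_zero K hv ha hva hvert h, zero_mul] at h1
    exact hμ h1.symm
  · by_contra h
    have hvert : K.IsVertex (K.src μ) := K.deg_src μ
    have hcomp : K.src μ = K.tgt (K.src μ) := (K.tgt_eq_self _ hvert).symm
    have h1 := hv.2.1 μ (K.src μ) hcomp
    rw [K.comp_src_self, vertex_eq_zero K hv ha hva hvert h, mul_zero] at h1
    exact hμ h1.symm

lemma T_zero (ha : K.IsVertex a) : T K a 0 = {a} := by
  ext l
  simp only [T, Set.mem_setOf_eq, Set.mem_singleton_iff]
  constructor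
  · rintro ⟨h0, ht, -⟩
    exact (K.tgt_eq_self l h0).symm.trans ht
  · rintro rfl
    exact ⟨ha, K.tgt_eq_self _ ha, K.src_eq_self _ ha⟩

lemma comp_inj {j : Fin r} {n' : Fin r → ℕ} {e1 l1 e2 l2 : K.Λ}
    (hd1 : K.deg e1 = Pi.single j 1) (hd1' : K.deg l1 = n') (hc1 : K.src e1 = K.tgt l1)
    (hd2 : K.deg e2 = Pi.single j 1) (hd2' : K.deg l2 = n') (hc2 : K.src e2 = K.tgt l2)
    (heq : K.comp e1 l1 = K.comp e2 l2) : e1 = e2 ∧ l1 = l2 := by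
  have hdeg : K.deg (K.comp e1 l1) = Pi.single j 1 + n' := by
    rw [K.deg_comp _ _ hc1, hd1, hd1']
  obtain ⟨p, -, hu⟩ := K.factorisation (K.comp e1 l1) (Pi.single j 1) n' hdeg
  have h1 := hu (e1, l1) ⟨hd1, hd1', hc1, rfl⟩
  have h2 := hu (e2, l2) ⟨hd2, hd2', hc2, heq.symm⟩
  have h3 : (e1, l1) = (e2, l2) := h1.trans h2.symm
  exact ⟨congrArg Prod.fst h3, congrArg Prod.snd h3⟩

lemma tsum_T_step (hv : IsScalarLambdaContraction K v) (ha : K.IsVertex a)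
    (hva : v a = 1) (j : Fin r) (n n' : Fin r → ℕ) (hn : n = Pi.single j 1 + n') :
    ∑' l : T K a n, F K v l.1 =
      (∑' e : T K a (Pi.single j 1), F K v e.1) * ∑' l' : T K a n', F K v l'.1 := by
  have hprod : (∑' e : T K a (Pi.single j 1), F K v e.1) * (∑' l' : T K a n', F K v l'.1)
      = ∑' p : ↥(T K a (Pi.single j 1)) × ↥(T K a n'), F K v p.1.1 * F K v p.2.1 := by
    rw [ENNReal.tsum_prod (f := fun (e : ↥(T K a (Pi.single j 1))) (l' : ↥(T K a n')) =>
      F K v e.1 * F K v l'.1), ← ENNReal.tsum_mul_right]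
    exact tsum_congr fun e => (ENNReal.tsum_mul_left).symm
  rw [hprod]
  have hTmem : ∀ (e : ↥(T K a (Pi.single j 1))) (l' : ↥(T K a n')),
      K.comp e.1 l'.1 ∈ T K a n := by
    rintro ⟨e, hde, hte, hse⟩ ⟨l', hdl, htl, hsl⟩
    have hc : K.src e = K.tgt l' := by rw [hse, htl]
    exact ⟨by rw [K.deg_comp _ _ hc, hde, hdl, hn], by rw [K.tgt_comp _ _ hc]; exact hte,
      by rw [K.src_comp _ _ hc]; exact hsl⟩
  refine tsum_eq_tsum_of_ne_zero_bij
    (fun p => ⟨K.comp p.1.1.1 p.1.2.1, hTmem _ _⟩) ?_ ?_ ?_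
  · rintro ⟨⟨⟨e1, he1⟩, ⟨l1, hl1⟩⟩, hp1⟩ ⟨⟨⟨e2, he2⟩, ⟨l2, hl2⟩⟩, hp2⟩ h
    have h' : K.comp e1 l1 = K.comp e2 l2 := congrArg Subtype.val h
    have hc1 : K.src e1 = K.tgt l1 := by rw [he1.2.2, hl1.2.1]
    have hc2 : K.src e2 = K.tgt l2 := by rw [he2.2.2, hl2.2.1]
    obtain ⟨he, hl⟩ := comp_inj K he1.1 hl1.1 hc1 he2.1 hl2.1 hc2 h'
    apply Subtype.ext
    exact Prod.ext (Subtype.ext he) (Subtype.ext hl)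
  · rintro ⟨l, hl⟩ hfl
    have hvl : v l ≠ 0 := F_ne_zero K |>.1 hfl
    obtain ⟨⟨e, l'⟩, ⟨hde, hdl', hc, hcomp⟩, -⟩ :=
      K.factorisation l (Pi.single j 1) n' (by rw [hl.1, hn])
    have hvel : v e * v l' = v l := by rw [hv.2.1 e l' hc, hcomp]
    have hve : v e ≠ 0 := fun h => hvl (by rw [← hvel, h, zero_mul])
    have hvl' : v l' ≠ 0 := fun h => hvl (by rw [← hvel, h, mul_zero])
    obtain ⟨hte, hse⟩ := mem_S_of_ne_zero K hv ha hva hve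
    obtain ⟨htl', hsl'⟩ := mem_S_of_ne_zero K hv ha hva hvl'
    refine ⟨⟨(⟨e, hde, hte, hse⟩, ⟨l', hdl', htl', hsl'⟩), ?_⟩, ?_⟩
    · simp only [Function.mem_support]
      exact mul_ne_zero (F_ne_zero K |>.2 hve) (F_ne_zero K |>.2 hvl')
    · exact Subtype.ext hcomp
  · rintro ⟨⟨⟨e, he⟩, ⟨l', hl'⟩⟩, hp⟩
    have hc : K.src e = K.tgt l' := by rw [he.2.2, hl'.2.1]
    show F K v (K.comp e l') = F K v e * F K v l'
    simp only [F]
    rw [← hv.2.1 e l' hc, nnnorm_mul]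
    push_cast
    ring

lemma tsum_T (hv : IsScalarLambdaContraction K v) (ha : K.IsVertex a) (hva : v a = 1) :
    ∀ (N : ℕ) (n : Fin r → ℕ), (∑ i, n i) ≤ N →
      ∑' l : T K a n, F K v l.1
        = ∏ j, (∑' e : T K a (Pi.single j 1), F K v e.1) ^ (n j) := by
  intro N
  induction N with
  | zero =>
    intro n hn
    have hn0 : n = 0 := by
      funext i
      have := (Finset.sum_eq_zero_iff.1 (Nat.le_zero.1 hn)) i (Finset.mem_univ i)
      simpa using this
    subst hn0
    rw [T_zero K ha]
    have h1 : ∑' l : ({a} : Set K.Λ), F K v l.1 = F K v a := tsum_singleton a (F K v)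
    rw [h1]
    simp [F, hva]
  | succ N ih =>
    intro n hn
    rcases eq_or_ne n 0 with rfl | h0
    · exact ih 0 (by simp)
    · obtain ⟨j, hj⟩ : ∃ j, n j ≠ 0 := by
        by_contra h
        push_neg at h
        exact h0 (funext h)
      set n' : Fin r → ℕ := n - Pi.single j 1 with hn'def
      have hdecomp : n = Pi.single j 1 + n' := by
        funext i
        by_cases hij : i = j
        · subst hij
          simp only [Pi.add_apply, Pi.sub_apply, Pi.single_eq_same, n']
          omega
        · simp [n', Pi.single_eq_of_ne hij]
      have hsum : (∑ i, n' i) ≤ N := by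
        have h1 : ∑ i, n i = ∑ i, (Pi.single j 1 + n' : Fin r → ℕ) i := by rw [← hdecomp]
        have h2 : ∑ i, (Pi.single j 1 + n' : Fin r → ℕ) i
            = (∑ i, Pi.single (M := fun _ => ℕ) j 1 i) + ∑ i, n' i := by
          simp [Finset.sum_add_distrib]
        have h3 : (∑ i, Pi.single (M := fun _ => ℕ) j 1 i) = 1 := by
          rw [Finset.sum_eq_single j (fun i _ hij => Pi.single_eq_of_ne hij 1)
            (fun h => absurd (Finset.mem_univ j) h)]
          simp
        omega
      rw [tsum_T_step K hv ha hva j n n' hdecomp, ih n' hsum, hdecomp]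
      set κf : Fin r → ℝ≥0∞ := fun i => ∑' e : T K a (Pi.single i 1), F K v e.1 with hκf
      calc κf j * ∏ i, κf i ^ (n' i)
          = (∏ i, κf i ^ (Pi.single (M := fun _ => ℕ) j 1 i)) * ∏ i, κf i ^ (n' i) := by
            congr 1
            rw [Finset.prod_eq_single j (fun i _ hij => by
              rw [Pi.single_eq_of_ne hij, pow_zero])
              (fun h => absurd (Finset.mem_univ j) h)]
            simp
        _ = ∏ i, κf i ^ ((Pi.single j 1 + n' : Fin r → ℕ) i) := by
            rw [← Finset.prod_mul_distrib]
            exact Finset.prod_congr rfl fun i _ => by rw [Pi.add_apply, pow_add]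

/-- Decomposing `S` by degree. -/
def sigmaEquiv (a : K.Λ) : (Σ n : Fin r → ℕ, ↥(T K a n)) ≃ ↥(S K a) where
  toFun p := ⟨p.2.1, p.2.2.2⟩
  invFun l := ⟨K.deg l.1, ⟨l.1, rfl, l.2⟩⟩
  left_inv := by rintro ⟨n, l, rfl, h⟩; rfl
  right_inv := by rintro ⟨l, h⟩; rfl

lemma tsum_S_eq (a : K.Λ) (v : K.Λ → ℂ) :
    ∑' l : S K a, F K v l.1 = ∑' n : Fin r → ℕ, ∑' l : T K a n, F K v l.1 := by
  rw [← ENNReal.tsum_sigma (fun n (l : ↥(T K a n)) => F K v l.1)]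
  exact ((sigmaEquiv K a).tsum_eq (fun l : ↥(S K a) => F K v l.1)).symm

lemma tsum_pi_pow : ∀ (m : ℕ) (f : Fin m → ℕ → ℝ≥0∞),
    ∑' n : Fin m → ℕ, ∏ i, f i (n i) = ∏ i, ∑' k, f i k := by
  intro m
  induction m with
  | zero =>
    intro f
    simp only [Finset.univ_eq_empty, Finset.prod_empty]
    exact tsum_eq_single (default : Fin 0 → ℕ)
      (fun b hb => absurd (Subsingleton.elim b default) hb)
  | succ m ih =>
    intro f
    rw [← (Fin.consEquiv (fun _ : Fin (m + 1) => ℕ)).tsum_eq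
      (fun n : Fin (m + 1) → ℕ => ∏ i, f i (n i))]
    simp only [Fin.consEquiv, Equiv.coe_fn_mk]
    have h1 : ∀ p : ℕ × (Fin m → ℕ),
        (∏ i, f i ((Fin.cons p.1 p.2 : Fin (m + 1) → ℕ) i)) = f 0 p.1 * ∏ i : Fin m, f i.succ (p.2 i) := by
      intro p
      rw [Fin.prod_univ_succ]
      simp [Fin.cons_zero, Fin.cons_succ]
    calc ∑' p : ℕ × (Fin m → ℕ), ∏ i, f i ((Fin.cons p.1 p.2 : Fin (m + 1) → ℕ) i)
        = ∑' p : ℕ × (Fin m → ℕ), f 0 p.1 * ∏ i : Fin m, f i.succ (p.2 i) :=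
          tsum_congr h1
      _ = ∑' (k : ℕ) (t : Fin m → ℕ), f 0 k * ∏ i : Fin m, f i.succ (t i) :=
          ENNReal.tsum_prod (f := fun (k : ℕ) (t : Fin m → ℕ) => f 0 k * ∏ i : Fin m, f i.succ (t i))
      _ = (∑' k, f 0 k) * ∑' t : Fin m → ℕ, ∏ i : Fin m, f i.succ (t i) := by
          rw [← ENNReal.tsum_mul_right]
          exact tsum_congr fun k => ENNReal.tsum_mul_left
      _ = (∑' k, f 0 k) * ∏ i : Fin m, ∑' k, f i.succ k := by rw [ih]
      _ = ∏ i, ∑' k, f i k := (Fin.prod_univ_succ (f := fun i : Fin (m + 1) => ∑' k, f i k)).symm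

lemma kappa_le_one (hv : IsScalarLambdaContraction K v) (j : Fin r) :
    ∑' e : T K a (Pi.single j 1), F K v e.1 ≤ 1 := by
  rw [ENNReal.tsum_eq_iSup_sum]
  refine iSup_le fun s => ?_
  have hinj : ∀ x ∈ s, ∀ y ∈ s, (x : K.Λ) = (y : K.Λ) → x = y :=
    fun x _ y _ h => Subtype.ext h
  have h1 : ∑ e ∈ s, F K v e.1 = ∑ l ∈ s.image Subtype.val, F K v l :=
    (Finset.sum_image hinj).symm
  have h2 := hv.2.2.1 (Pi.single j 1) (s.image Subtype.val) (fun l hl => by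
    obtain ⟨e, _, rfl⟩ := Finset.mem_image.1 hl
    exact e.2.1)
  have h3 : ∑ l ∈ s.image Subtype.val, F K v l
      = ENNReal.ofReal (∑ l ∈ s.image Subtype.val, ‖v l‖ ^ 2) := by
    rw [ENNReal.ofReal_sum_of_nonneg (fun _ _ => sq_nonneg _)]
    refine Finset.sum_congr rfl fun l _ => ?_
    simp only [F]
    rw [ENNReal.ofReal_pow (norm_nonneg _), ofReal_norm, enorm_eq_nnnorm]
  rw [h1, h3]
  exact ENNReal.ofReal_le_one.2 h2

lemma hasSum_real (v : K.Λ → ℂ) {A : Set K.Λ} (hfin : ∑' l : A, F K v l.1 ≠ ⊤) :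
    HasSum (fun l : A => ‖v l.1‖ ^ 2) (∑' l : A, F K v l.1).toReal := by
  set g : A → ℝ≥0 := fun l => ‖v l.1‖₊ ^ 2 with hg
  have hgF : ∀ l : A, F K v l.1 = ((g l : ℝ≥0) : ℝ≥0∞) := by
    intro l
    simp [F, g, ENNReal.coe_pow]
  have hsum : Summable g := by
    rw [← ENNReal.tsum_coe_ne_top_iff_summable]
    rw [← tsum_congr hgF]
    exact hfin
  have h1 : HasSum (fun l : A => ((g l : ℝ≥0) : ℝ)) (((∑' l, g l : ℝ≥0)) : ℝ) :=
    NNReal.hasSum_coe.2 hsum.hasSum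
  have h2 : ∑' l : A, F K v l.1 = (((∑' l, g l : ℝ≥0)) : ℝ≥0∞) := by
    rw [ENNReal.coe_tsum hsum]
    exact tsum_congr hgF
  rw [h2, ENNReal.coe_toReal]
  have hfun : (fun l : A => ‖v l.1‖ ^ 2) = (fun l : A => ((g l : ℝ≥0) : ℝ)) := by
    funext l
    simp [g]
  rw [hfun]
  exact h1

end CharAux

end CharAux


open scoped ENNReal NNReal in
open CharAux in
/-- A `Λ`-contraction on `ℂ` supported at a vertex `a`, whose colour
sums `κ_j` are strictly less than `1`, arises as a vector state given by an explicit
vector of `ℓ²(Λ)`. -/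
theorem character_is_vector_state
    {r : ℕ} (K : KGraph r) [DecidableEq K.Λ]
    (L : K.Λ → FockSpace K →L[ℂ] FockSpace K) (hL : IsCreationFamily K L)
    (a : K.Λ) (ha : K.IsVertex a)
    (v : K.Λ → ℂ) (hv : IsScalarLambdaContraction K v) (hva : v a = 1)
    (hκ : ∀ j : Fin r,
      (∑' l : {l : K.Λ // K.deg l = Pi.single j 1 ∧ K.tgt l = a ∧ K.src l = a},
        ‖v l.1‖ ^ 2) < 1) :
    ∃ ξ : FockSpace K,
      (∀ μ : K.Λ,
        (ξ : ∀ _ : K.Λ, ℂ) μ =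
          if K.tgt μ = a ∧ K.src μ = a then (starRingEnd ℂ) (v μ) else 0) ∧
      HasSum (fun l : {l : K.Λ // K.tgt l = a ∧ K.src l = a} => ‖v l.1‖ ^ 2)
        (∏ j : Fin r,
          (1 - ∑' l : {l : K.Λ // K.deg l = Pi.single j 1 ∧ K.tgt l = a ∧ K.src l = a},
            ‖v l.1‖ ^ 2)⁻¹) ∧
      (∀ μ : K.Λ,
        (inner ℂ (((‖ξ‖⁻¹ : ℝ) : ℂ) • ξ) (L μ ((((‖ξ‖⁻¹ : ℝ) : ℂ)) • ξ)) : ℂ) = v μ) := by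
  have hκ1 : ∀ j : Fin r, (∑' e : T K a (Pi.single j 1), F K v e.1) ≤ 1 :=
    fun j => kappa_le_one K hv j
  have hκfin : ∀ j, (∑' e : T K a (Pi.single j 1), F K v e.1) ≠ ⊤ :=
    fun j => (lt_of_le_of_lt (hκ1 j) ENNReal.one_lt_top).ne
  have hκreal : ∀ j : Fin r,
      (∑' l : {l : K.Λ // K.deg l = Pi.single j 1 ∧ K.tgt l = a ∧ K.src l = a}, ‖v l.1‖ ^ 2)
        = (∑' e : T K a (Pi.single j 1), F K v e.1).toReal :=
    fun j => (hasSum_real K v (hκfin j)).tsum_eq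
  have hκlt : ∀ j, (∑' e : T K a (Pi.single j 1), F K v e.1) < 1 := by
    intro j
    have h := hκ j
    rw [hκreal j] at h
    by_contra hc
    push_neg at hc
    have h1 : (1 : ℝ≥0∞).toReal ≤ (∑' e : T K a (Pi.single j 1), F K v e.1).toReal :=
      ENNReal.toReal_mono (hκfin j) hc
    rw [ENNReal.toReal_one] at h1
    linarith
  have hCS : (∑' l : S K a, F K v l.1)
      = ∏ j, (1 - ∑' e : T K a (Pi.single j 1), F K v e.1)⁻¹ := by
    rw [tsum_S_eq K a v]
    calc ∑' n : Fin r → ℕ, ∑' l : T K a n, F K v l.1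
        = ∑' n : Fin r → ℕ, ∏ j, (∑' e : T K a (Pi.single j 1), F K v e.1) ^ (n j) :=
          tsum_congr fun n => tsum_T K hv ha hva (∑ i, n i) n le_rfl
      _ = ∏ j, ∑' k : ℕ, (∑' e : T K a (Pi.single j 1), F K v e.1) ^ k :=
          tsum_pi_pow r _
      _ = ∏ j, (1 - ∑' e : T K a (Pi.single j 1), F K v e.1)⁻¹ :=
          Finset.prod_congr rfl fun j _ => ENNReal.tsum_geometric _
  have hfact : ∀ j : Fin r, (1 - ∑' e : T K a (Pi.single j 1), F K v e.1)⁻¹ ≠ ⊤ := by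
    intro j
    rw [Ne, ENNReal.inv_eq_top, tsub_eq_zero_iff_le]
    exact not_le.2 (hκlt j)
  have hCfin : (∑' l : S K a, F K v l.1) ≠ ⊤ := by
    rw [hCS]
    exact ENNReal.prod_ne_top fun j _ => hfact j
  have hHS : HasSum (fun l : S K a => ‖v l.1‖ ^ 2) (∑' l : S K a, F K v l.1).toReal :=
    hasSum_real K v hCfin
  have hCval : (∑' l : S K a, F K v l.1).toReal
      = ∏ j : Fin r,
          (1 - ∑' l : {l : K.Λ // K.deg l = Pi.single j 1 ∧ K.tgt l = a ∧ K.src l = a},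
            ‖v l.1‖ ^ 2)⁻¹ := by
    rw [hCS, ENNReal.toReal_prod]
    refine Finset.prod_congr rfl fun j _ => ?_
    rw [hκreal j, ENNReal.toReal_inv, ENNReal.toReal_sub_of_le (hκ1 j) ENNReal.one_ne_top,
      ENNReal.toReal_one]
  set w : K.Λ → ℂ :=
    fun l => if K.tgt l = a ∧ K.src l = a then (starRingEnd ℂ) (v l) else 0 with hw
  have hwl_pos : ∀ l, K.tgt l = a ∧ K.src l = a → w l = (starRingEnd ℂ) (v l) := by
    intro l hl
    rw [hw]
    exact if_pos hl
  have hwl_neg : ∀ l, ¬(K.tgt l = a ∧ K.src l = a) → w l = 0 := by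
    intro l hl
    rw [hw]
    exact if_neg hl
  have hnorm_w : ∀ l, ‖w l‖ ^ 2 = Set.indicator (S K a) (fun l => ‖v l‖ ^ 2) l := by
    intro l
    by_cases hl : K.tgt l = a ∧ K.src l = a
    · rw [hwl_pos l hl, Set.indicator_of_mem (show l ∈ S K a from hl), RCLike.norm_conj]
    · rw [hwl_neg l hl, Set.indicator_of_notMem (show l ∉ S K a from hl)]
      simp
  have hWsum : HasSum (fun l : K.Λ => ‖w l‖ ^ 2) (∑' l : S K a, F K v l.1).toReal := by
    have h1 : HasSum (Set.indicator (S K a) fun l => ‖v l‖ ^ 2)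
        (∑' l : S K a, F K v l.1).toReal := hasSum_subtype_iff_indicator.1 hHS
    have h2 : (fun l : K.Λ => ‖w l‖ ^ 2) = Set.indicator (S K a) fun l => ‖v l‖ ^ 2 :=
      funext hnorm_w
    rw [h2]
    exact h1
  have hmem : Memℓp w 2 := by
    apply memℓp_gen
    have h4 : ((2 : ℝ≥0∞).toReal) = ((2 : ℕ) : ℝ) := by norm_num
    rw [h4]
    simp_rw [Real.rpow_natCast]
    exact hWsum.summable
  set ξ : FockSpace K := ⟨w, hmem⟩ with hξ
  set Cr : ℝ := (∑' l : S K a, F K v l.1).toReal with hCr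
  have hmemA : a ∈ S K a := ⟨K.tgt_eq_self a ha, K.src_eq_self a ha⟩
  have hCr1 : (1 : ℝ) ≤ Cr := by
    have h2 := le_hasSum hHS ⟨a, hmemA⟩ (fun l _ => sq_nonneg _)
    simpa [hva] using h2
  have hCrpos : (0 : ℝ) < Cr := lt_of_lt_of_le one_pos hCr1
  have hnormξ : ‖ξ‖ ^ 2 = Cr := by
    have h2 : (0 : ℝ) < (2 : ℝ≥0∞).toReal := by norm_num
    have h3 := lp.norm_rpow_eq_tsum h2 ξ
    have h4 : ((2 : ℝ≥0∞).toReal) = ((2 : ℕ) : ℝ) := by norm_num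
    rw [h4] at h3
    simp_rw [Real.rpow_natCast] at h3
    rw [h3]
    exact hWsum.tsum_eq
  have hξnorm_ne : ‖ξ‖ ≠ 0 := by
    intro h
    rw [h] at hnormξ
    simp at hnormξ
    linarith
  refine ⟨ξ, fun μ => congrFun hw μ, ?_, ?_⟩
  · rw [← hCval]
    exact hHS
  · intro μ
    have hsingle : HasSum (fun l : K.Λ => lp.single 2 l (w l)) ξ :=
      lp.hasSum_single ENNReal.ofNat_ne_top ξ
    have hterm : ∀ l : K.Λ, (inner ℂ ξ (L μ (lp.single 2 l (w l))) : ℂ)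
        = v μ * (if K.tgt l = a ∧ K.src l = a then ((‖v l‖ ^ 2 : ℝ) : ℂ) else 0) := by
      intro l
      by_cases hl : K.tgt l = a ∧ K.src l = a
      · rw [if_pos hl]
        have hsm : (lp.single 2 l (w l) : FockSpace K) = w l • lp.single 2 l (1 : ℂ) := by
          rw [← lp.single_smul, smul_eq_mul, mul_one]
        by_cases hcomp : K.src μ = K.tgt l
        · have hLs := (hL μ l).1 hcomp
          rw [hsm, map_smul, hLs, inner_smul_right, lp.inner_single_right, RCLike.inner_apply]
          have hcoord : (ξ : ∀ _ : K.Λ, ℂ) (K.comp μ l) = w (K.comp μ l) := rfl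
          rw [hcoord]
          by_cases hvμ : v μ = 0
          · have hvc : v (K.comp μ l) = 0 := by rw [← hv.2.1 μ l hcomp, hvμ, zero_mul]
            have hwc : w (K.comp μ l) = 0 := by
              by_cases h : K.tgt (K.comp μ l) = a ∧ K.src (K.comp μ l) = a
              · rw [hwl_pos _ h, hvc, map_zero]
              · exact hwl_neg _ h
            simp [hvμ, hwc]
          · obtain ⟨htμ, hsμ⟩ := mem_S_of_ne_zero K hv ha hva hvμ
            have hcS : K.tgt (K.comp μ l) = a ∧ K.src (K.comp μ l) = a :=
              ⟨by rw [K.tgt_comp μ l hcomp]; exact htμ,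
               by rw [K.src_comp μ l hcomp]; exact hl.2⟩
            rw [hwl_pos _ hcS, hwl_pos l hl, Complex.conj_conj, ← hv.2.1 μ l hcomp, one_mul]
            have hconj : (starRingEnd ℂ) (v l) * v l = ((‖v l‖ ^ 2 : ℝ) : ℂ) := by
              rw [mul_comm, Complex.mul_conj, Complex.normSq_eq_norm_sq]
            calc (starRingEnd ℂ) (v l) * (v μ * v l)
                = v μ * ((starRingEnd ℂ) (v l) * v l) := by ring
              _ = v μ * ((‖v l‖ ^ 2 : ℝ) : ℂ) := by rw [hconj]
        · have hLz := (hL μ l).2 hcomp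
          rw [hsm, map_smul, hLz, smul_zero, inner_zero_right]
          have hvμ : v μ = 0 := by
            by_contra h
            exact hcomp (((mem_S_of_ne_zero K hv ha hva h).2).trans hl.1.symm)
          rw [hvμ, zero_mul]
      · rw [if_neg hl, mul_zero, hwl_neg l hl]
        have hz : (lp.single 2 l (0 : ℂ) : FockSpace K) = 0 := by
          rw [show (0 : ℂ) = (0 : ℂ) • (1 : ℂ) from (zero_smul ℂ 1).symm, lp.single_smul,
            zero_smul]
        rw [hz, map_zero, inner_zero_right]
    have h1 : HasSum (fun l : K.Λ => (inner ℂ ξ (L μ (lp.single 2 l (w l))) : ℂ))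
        (inner ℂ ξ (L μ ξ)) := by
      have h0 := hsingle.mapL ((innerSL ℂ ξ).comp (L μ))
      simpa [ContinuousLinearMap.comp_apply, innerSL_apply_apply] using h0
    have h3 := hWsum.mapL Complex.ofRealCLM
    have h4 : HasSum (fun l : K.Λ =>
        v μ * (if K.tgt l = a ∧ K.src l = a then ((‖v l‖ ^ 2 : ℝ) : ℂ) else 0))
        (v μ * ((Cr : ℝ) : ℂ)) := by
      refine HasSum.mul_left _ ?_
      have heq : (fun l : K.Λ =>
          (if K.tgt l = a ∧ K.src l = a then ((‖v l‖ ^ 2 : ℝ) : ℂ) else 0))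
          = fun l : K.Λ => ((‖w l‖ ^ 2 : ℝ) : ℂ) := by
        funext l
        by_cases hl : K.tgt l = a ∧ K.src l = a
        · rw [if_pos hl, hnorm_w l, Set.indicator_of_mem (show l ∈ S K a from hl)]
        · rw [if_neg hl, hnorm_w l, Set.indicator_of_notMem (show l ∉ S K a from hl)]
          simp
      rw [heq]
      simpa [Complex.ofRealCLM_apply] using h3
    have h5 : (inner ℂ ξ (L μ ξ) : ℂ) = v μ * ((Cr : ℝ) : ℂ) := by
      rw [funext hterm] at h1
      exact h1.unique h4
    rw [map_smul, inner_smul_left, inner_smul_right, h5, Complex.conj_ofReal]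
    have hkey : ((‖ξ‖⁻¹ : ℝ) : ℂ) * (((‖ξ‖⁻¹ : ℝ) : ℂ) * ((Cr : ℝ) : ℂ)) = 1 := by
      have hr : (‖ξ‖⁻¹ : ℝ) * ((‖ξ‖⁻¹ : ℝ) * Cr) = 1 := by
        rw [← hnormξ]
        field_simp
      calc ((‖ξ‖⁻¹ : ℝ) : ℂ) * (((‖ξ‖⁻¹ : ℝ) : ℂ) * ((Cr : ℝ) : ℂ))
          = (((‖ξ‖⁻¹ * (‖ξ‖⁻¹ * Cr) : ℝ)) : ℂ) := by push_cast; ring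
        _ = 1 := by rw [hr]; norm_num
    linear_combination v μ * hkey
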